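/- A vertex v of a graph G is shedding if and only if there does not exist an independent set S ⊆ N₂(v) that dominates N(v), where N₂(v) is the set of vertices at distance exactly 2 from v. -/
import Mathlib


variable {V : Type*}

/-- `S` is an independent set of `G`. -/
def IndepSet (G : SimpleGraph V) (S : Set V) : Prop :=
  ∀ ⦃a⦄, a ∈ S → ∀ ⦃b⦄, b ∈ S → ¬ G.Adj a b

/-- `S` is a maximal independent set of `G`. -/
def MaxIndepSet (G : SimpleGraph V) (S : Set V) : Prop :=
  IndepSet G S ∧ ∀ T : Set V, IndepSet G T → S ⊆ T → S = T

/-- The closed neighborhood `N[S]` of a set of vertices. -/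
def ClosedNbhd (G : SimpleGraph V) (S : Set V) : Set V :=
  S ∪ {u | ∃ s ∈ S, G.Adj s u}

/-- `v` is a shedding vertex of `G`. -/
def Shedding (G : SimpleGraph V) (v : V) : Prop :=
  ∀ S : Set V, S ⊆ (G.neighborSet v ∪ {v})ᶜ → IndepSet G S →
    ∃ u ∈ G.neighborSet v, IndepSet G (S ∪ {u})

/-- `N₂(v)`: vertices at distance exactly 2 from `v`. -/
def N2 (G : SimpleGraph V) (v : V) : Set V := {u | G.dist v u = 2}

/-- The edge `xy` is relating in `G`. -/
def Relating (G : SimpleGraph V) (x y : V) : Prop :=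
  ∃ S : Set V, IndepSet G S ∧ MaxIndepSet G (S ∪ {x}) ∧ MaxIndepSet G (S ∪ {y})

/-- `G` contains a cycle of length `k` as a (not necessarily induced) subgraph. -/
def CycleLen (G : SimpleGraph V) (k : ℕ) : Prop :=
  ∃ f : ZMod k → V, Function.Injective f ∧ ∀ i : ZMod k, G.Adj (f i) (f (i + 1))

/-- If `s` is neither `v` nor a neighbor of `v`, but is adjacent to a neighbor `u` of `v`,
then `dist v s = 2`. -/
lemma dist_eq_two_aux (G : SimpleGraph V) {v u s : V} (hvu : G.Adj v u) (hus : G.Adj u s)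
    (hsv : s ≠ v) (hnadj : ¬ G.Adj v s) : G.dist v s = 2 := by
  have hle : G.dist v s ≤ 2 := by
    have := SimpleGraph.dist_le (SimpleGraph.Walk.cons hvu (SimpleGraph.Walk.cons hus
      SimpleGraph.Walk.nil))
    simpa using this
  have h0 : G.dist v s ≠ 0 := by
    intro h
    rw [SimpleGraph.dist_eq_zero_iff_eq_or_not_reachable] at h
    rcases h with h | h
    · exact hsv h.symm
    · exact h ⟨SimpleGraph.Walk.cons hvu (SimpleGraph.Walk.cons hus SimpleGraph.Walk.nil)⟩
  have h1 : G.dist v s ≠ 1 := fun h =>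
    hnadj (SimpleGraph.dist_eq_one_iff_adj.mp h)
  omega

theorem shedding_iff_no_dominating_indep_in_N2 [Fintype V] (G : SimpleGraph V) (v : V) :
    Shedding G v ↔
      ¬ ∃ S : Set V, S ⊆ N2 G v ∧ IndepSet G S ∧
        G.neighborSet v ⊆ ClosedNbhd G S := by
  constructor
  · rintro hshed ⟨S, hS2, hSi, hdom⟩
    have hsub : S ⊆ (G.neighborSet v ∪ {v})ᶜ := by
      intro s hs
      have hd : G.dist v s = 2 := hS2 hs
      intro hmem
      rcases hmem with h | h
      · rw [SimpleGraph.mem_neighborSet] at h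
        rw [← SimpleGraph.dist_eq_one_iff_adj] at h
        omega
      · simp only [Set.mem_singleton_iff] at h
        subst h
        simp [SimpleGraph.dist_self] at hd
    obtain ⟨u, hu, hind⟩ := hshed S hsub hSi
    rcases hdom hu with h | ⟨s, hsS, hadj⟩
    · have : G.dist v u = 2 := hS2 h
      rw [show G.dist v u = 1 from SimpleGraph.dist_eq_one_iff_adj.mpr hu] at this
      omega
    · exact hind (Or.inl hsS) (Or.inr rfl) hadj
  · intro hno S hsub hSi
    set S' := S ∩ N2 G v with hS'
    by_contra hcon
    push_neg at hcon
    apply hno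
    refine ⟨S', Set.inter_subset_right, fun a ha b hb => hSi ha.1 hb.1, ?_⟩
    intro u hu
    by_contra hnotdom
    apply hcon u hu
    intro a ha b hb hadj
    rcases ha with ha | ha <;> rcases hb with hb | hb
    · exact hSi ha hb hadj
    · -- a ∈ S, b = u
      simp only [Set.mem_singleton_iff] at hb; subst hb
      have hav : a ≠ v := by
        intro h; subst h
        exact (hsub ha) (Or.inr rfl)
      have hnadj : ¬ G.Adj v a := fun h => (hsub ha) (Or.inl h)
      have : a ∈ N2 G v := dist_eq_two_aux G hu hadj.symm hav hnadj
      exact hnotdom (Or.inr ⟨a, ⟨ha, this⟩, hadj⟩)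
    · simp only [Set.mem_singleton_iff] at ha; subst ha
      have hbv : b ≠ v := by
        intro h; subst h
        exact (hsub hb) (Or.inr rfl)
      have hnadj : ¬ G.Adj v b := fun h => (hsub hb) (Or.inl h)
      have : b ∈ N2 G v := dist_eq_two_aux G hu hadj hbv hnadj
      exact hnotdom (Or.inr ⟨b, ⟨hb, this⟩, hadj.symm⟩)
    · simp only [Set.mem_singleton_iff] at ha hb; subst ha; subst hb
      exact G.irrefl hadj
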